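/- Let L be a lattice with bottom element 0 and let k ≥ 1. Every join-irreducible element of the lattice L* of monotone k-tuples of L (with componentwise order) has the form (0,…,0,p,…,p) for some join-irreducible p of L and some position i: i.e., any monotone tuple T containing two distinct non-bottom values a ≺ b can be written as the join of two monotone tuples each strictly smaller than T, and any tuple of the form (0,…,0,p,…,p) with p join-reducible is join-reducible in L*. -/
import Mathlib


theorem joinIrreducible_tuple_form {α : Type*} [Lattice α] [OrderBot α]
    {k : ℕ} (hk : 1 ≤ k) (T : Fin k → α) (hT : Monotone T)
    (hne : T ≠ fun _ => ⊥)
    (hirr : ∀ A B : Fin k → α, Monotone A → Monotone B → T = A ⊔ B →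
      T = A ∨ T = B) :
    ∃ (p : α) (i : Fin k),
      (p ≠ ⊥ ∧ ∀ a b : α, p = a ⊔ b → p = a ∨ p = b) ∧
      T = fun j : Fin k => if (j : ℕ) < (i : ℕ) then (⊥ : α) else p := by
  classical
  set last : Fin k := ⟨k - 1, by omega⟩ with hlast
  set p : α := T last with hp
  -- Step 1: every nonbot value equals p
  have step1 : ∀ j : Fin k, T j ≠ ⊥ → T j = p := by
    intro j hj
    by_contra hjp
    have hjle : T j ≤ p := hT (by
      rw [Fin.le_def]
      simp only [hlast]
      omega)
    set A : Fin k → α := fun m => T m ⊓ T j with hA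
    set B : Fin k → α := fun m => if m ≤ j then ⊥ else T m with hB
    have hAmono : Monotone A := fun x y hxy => inf_le_inf_right _ (hT hxy)
    have hBmono : Monotone B := by
      intro x y hxy
      simp only [hB]
      by_cases h1 : x ≤ j
      · simp only [if_pos h1]; exact bot_le
      · have h2 : ¬ y ≤ j := fun hy => h1 (le_trans hxy hy)
        simp only [if_neg h1, if_neg h2]
        exact hT hxy
    have hsup : T = A ⊔ B := by
      funext m
      simp only [Pi.sup_apply, hA, hB]
      by_cases hm : m ≤ j
      · simp [hm, inf_eq_left.mpr (hT hm)]
      · simp only [hm, if_neg hm, if_false]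
        exact (sup_eq_right.mpr inf_le_left).symm
    rcases hirr A B hAmono hBmono hsup with h | h
    · have : p = T last ⊓ T j := by rw [← hp]; exact congrFun h last
      exact hjp ((inf_eq_right.mpr hjle ▸ this).symm)
    · have : T j = ⊥ := by
        have := congrFun h j
        simpa [hB] using this
      exact hj this
  -- Step 2: minimal nonbot index
  have hex : ∃ n : ℕ, ∃ h : n < k, T ⟨n, h⟩ ≠ ⊥ := by
    by_contra h
    push_neg at h
    exact hne (funext fun j => h j.1 j.2)
  obtain ⟨hn, hTn⟩ := Nat.find_spec hex
  set i : Fin k := ⟨Nat.find hex, hn⟩ with hi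
  have hTi : T i = p := step1 i hTn
  have hbot : ∀ j : Fin k, (j : ℕ) < (i : ℕ) → T j = ⊥ := by
    intro j hj
    have := Nat.find_min hex (m := j.1) hj
    push_neg at this
    have := this j.2
    simpa using this
  have hval : ∀ j : Fin k, ¬ (j : ℕ) < (i : ℕ) → T j = p := by
    intro j hj
    apply step1
    intro hbotj
    have : T i ≤ T j := hT (by omega : i ≤ j)
    rw [hbotj] at this
    exact hTn (le_bot_iff.mp (by simpa [hi] using this))
  refine ⟨p, i, ⟨?_, ?_⟩, ?_⟩
  · rw [← hTi]; exact hTn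
  · intro a b hab
    set A : Fin k → α := fun m => if (m : ℕ) < (i : ℕ) then ⊥ else a with hA
    set B : Fin k → α := fun m => if (m : ℕ) < (i : ℕ) then ⊥ else b with hB
    have mono : ∀ c : α, Monotone (fun m : Fin k => if (m : ℕ) < (i : ℕ) then ⊥ else c) := by
      intro c x y hxy
      by_cases h1 : (x : ℕ) < (i : ℕ)
      · simp only [if_pos h1]; exact bot_le
      · have h2 : ¬ (y : ℕ) < (i : ℕ) := fun hy => h1 (lt_of_le_of_lt hxy hy)
        simp only [if_neg h1, if_neg h2]
        exact le_rfl
    have hsup : T = A ⊔ B := by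
      funext m
      simp only [Pi.sup_apply, hA, hB]
      by_cases hm : (m : ℕ) < (i : ℕ)
      · simp [hm, hbot m hm]
      · simp [hm, hval m hm, hab]
    rcases hirr A B (mono a) (mono b) hsup with h | h
    · left
      have := congrFun h i
      rw [hTi] at this
      simp only [hA, lt_self_iff_false, if_false] at this
      exact this
    · right
      have := congrFun h i
      rw [hTi] at this
      simp only [hB, lt_self_iff_false, if_false] at this
      exact this
  · funext j
    by_cases hj : (j : ℕ) < (i : ℕ)
    · simp [hj, hbot j hj]
    · simp [hj, hval j hj]
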